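/- If p : E → B is a fibration, then p has the unique path lifting property (upl) if and only if p has the unique path homotopically lifting property (uphl). -/

import Mathlib

universe u

open scoped unitInterval

/-- `p` has the unique path lifting property (upl). -/
def Upl {E B : Type*} [TopologicalSpace E] [TopologicalSpace B] (p : C(E, B)) : Prop :=
  ∀ α β : C(unitInterval, E), α 0 = β 0 → p.comp α = p.comp β → α = β

/-- `p` has the unique path homotopically lifting property (uphl). -/
def Uphl {E B : Type*} [TopologicalSpace E] [TopologicalSpace B] (p : C(E, B)) : Prop :=
  ∀ α β : C(unitInterval, E), α 0 = β 0 →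
    (p.comp α).HomotopicRel (p.comp β) {0, 1} →
    α.HomotopicRel β {0, 1}

/-- `p` is a (Hurewicz) fibration: it has the homotopy lifting property with respect to
every topological space. -/
def IsFibration {E B : Type*} [TopologicalSpace E] [TopologicalSpace B] (p : C(E, B)) : Prop :=
  ∀ (X : Type u) [TopologicalSpace X] (f : C(X, E)) (F : C(X × unitInterval, B)),
    (∀ x, F (x, 0) = p (f x)) →
    ∃ F' : C(X × unitInterval, E), (∀ z, p (F' z) = F z) ∧ (∀ x, F' (x, 0) = f x)

theorem fibration_upl_iff_uphl_aux.{v} {E B : Type*} [TopologicalSpace E] [TopologicalSpace B]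
    (p : C(E, B)) (hp : IsFibration.{v} p) :
    Upl p ↔ Uphl p := by
  constructor
  · intro hupl α β h0 hhom
    obtain ⟨G⟩ := hhom
    let F : C(ULift.{v} unitInterval × unitInterval, B) :=
      ⟨fun z => G (z.2, z.1.down),
        G.continuous.comp (continuous_snd.prodMk (continuous_uliftDown.comp continuous_fst))⟩
    have hF0 : ∀ x : ULift.{v} unitInterval, F (x, 0) = p ((α.comp ⟨ULift.down, continuous_uliftDown⟩) x) := by
      intro x
      simp only [F, ContinuousMap.coe_mk, G.apply_zero, ContinuousMap.comp_apply]
    obtain ⟨F', hF'p, hF'0⟩ := hp (ULift.{v} unitInterval)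
      (α.comp ⟨ULift.down, continuous_uliftDown⟩) F hF0
    -- paths at endpoints are constant
    have hc : ∀ x : unitInterval, x ∈ ({0, 1} : Set unitInterval) →
        ∀ t : unitInterval, F' (ULift.up x, t) = α x := by
      intro x hx
      have key : (⟨fun t => F' (ULift.up x, t),
          F'.continuous.comp (continuous_const.prodMk continuous_id)⟩ : C(unitInterval, E))
          = ContinuousMap.const unitInterval (α x) := by
        apply hupl
        · simpa using hF'0 (ULift.up x)
        · ext t
          simp only [ContinuousMap.comp_apply, ContinuousMap.coe_mk, ContinuousMap.const_apply]
          rw [hF'p]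
          simp only [F, ContinuousMap.coe_mk]
          exact G.eq_fst t hx
      intro t
      have := congrFun (congrArg (fun f : C(unitInterval, E) => (f : unitInterval → E)) key) t
      simpa using this
    -- top of the lifted homotopy equals β
    have htop : (⟨fun x => F' (ULift.up x, 1),
        F'.continuous.comp ((continuous_uliftUp.comp continuous_id).prodMk continuous_const)⟩ :
        C(unitInterval, E)) = β := by
      apply hupl
      · show F' (ULift.up 0, 1) = β 0
        rw [hc 0 (by simp) 1, h0]
      · ext x
        simp only [ContinuousMap.comp_apply, ContinuousMap.coe_mk]
        rw [hF'p]
        simp only [F, ContinuousMap.coe_mk]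
        exact G.apply_one x
    refine ⟨⟨⟨⟨fun z => F' (ULift.up z.2, z.1), ?_⟩, ?_, ?_⟩, ?_⟩⟩
    · exact F'.continuous.comp ((continuous_uliftUp.comp continuous_snd).prodMk continuous_fst)
    · intro x; simpa using hF'0 (ULift.up x)
    · intro x
      have := congrFun (congrArg (fun f : C(unitInterval, E) => (f : unitInterval → E)) htop) x
      simpa using this
    · intro t x hx
      exact hc x hx t
  · intro huphl α β h0 hpq
    ext s
    have hmem : ∀ t : unitInterval, (s : ℝ) * (t : ℝ) ∈ unitInterval := by
      intro t
      exact ⟨mul_nonneg s.2.1 t.2.1, mul_le_one₀ s.2.2 t.2.1 t.2.2⟩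
    let m : C(unitInterval, unitInterval) :=
      ⟨fun t => ⟨(s : ℝ) * (t : ℝ), hmem t⟩, by
        apply Continuous.subtype_mk
        exact continuous_const.mul continuous_subtype_val⟩
    have h0' : (α.comp m) 0 = (β.comp m) 0 := by
      have : m 0 = 0 := by
        apply Subtype.ext
        simp [m]
      simp only [ContinuousMap.comp_apply, this, h0]
    have hrel : (p.comp (α.comp m)).HomotopicRel (p.comp (β.comp m)) {0, 1} := by
      rw [← ContinuousMap.comp_assoc, ← ContinuousMap.comp_assoc, hpq]
      exact ⟨ContinuousMap.HomotopyRel.refl _ _⟩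
    obtain ⟨K⟩ := huphl (α.comp m) (β.comp m) h0' hrel
    have h1 : m 1 = s := by
      apply Subtype.ext
      simp [m]
    have := (K.eq_fst 0 (by simp : (1 : unitInterval) ∈ ({0, 1} : Set unitInterval))).symm.trans
      (K.eq_snd 0 (by simp))
    simpa [h1] using this

theorem fibration_upl_iff_uphl {E B : Type*} [TopologicalSpace E] [TopologicalSpace B]
    (p : C(E, B)) (hp : IsFibration p) :
    Upl p ↔ Uphl p :=
  fibration_upl_iff_uphl_aux p hp
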